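/- Let n ≥ 2, let λ be a Borel probability measure on ℝ^n, let (λ_i)_{i∈I} be a pure decomposition of λ, and for each i let W_i be the linear span of supp λ_i. Suppose that for every i ∈ I there exists d_i ∈ ℕ such that the d_i-fold convolution power λ_i^{d_i} is absolutely continuous with respect to Lebesgue (Haar) measure on the subspace W_i. Then every affine subspace A of ℝ^n with λ(A) > 0 is a vector subspace of ℝ^n. -/
import Mathlib


open MeasureTheory

/-- The (topological) support of a measure. -/
def msupp {X : Type*} [TopologicalSpace X] [MeasurableSpace X] (μ : Measure X) : Set X :=
  {x | ∀ U : Set X, IsOpen U → x ∈ U → 0 < μ U}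

/-- A nonzero finite Borel measure on `ℝ^d` is *pure* if every vector subspace of
positive measure contains the linear span of its support. -/
def IsPure {d : ℕ} (μ : Measure (Fin d → ℝ)) : Prop :=
  μ ≠ 0 ∧ IsFiniteMeasure μ ∧
    ∀ W : Submodule ℝ (Fin d → ℝ), 0 < μ (W : Set (Fin d → ℝ)) →
      Submodule.span ℝ (msupp μ) ≤ W

/-- A *pure decomposition* of a finite Borel measure `μ` on `ℝ^d`. -/
def IsPureDecomp {d : ℕ} {ι : Type*} (μ : Measure (Fin d → ℝ))
    (f : ι → Measure (Fin d → ℝ)) : Prop :=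
  Countable ι ∧ (∀ i, IsPure (f i)) ∧
    (∀ i j : ι, i ≠ j →
      Submodule.span ℝ (msupp (f i)) ≠ Submodule.span ℝ (msupp (f j))) ∧
    μ = Measure.sum f

/-- `n`-fold convolution power of a measure on an additive monoid. -/
noncomputable def addConvPow {V : Type*} [AddMonoid V] [MeasurableSpace V]
    (μ : Measure V) : ℕ → Measure V
  | 0 => Measure.dirac 0
  | n + 1 => ((μ.prod (addConvPow μ n)).map fun p : V × V => p.1 + p.2)

/-- Lebesgue (Haar) measure of a subspace `W ⊆ ℝ^n`, viewed as a measure on `ℝ^n`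
supported on `W`. -/
noncomputable def subspaceHaar {n : ℕ} (W : Submodule ℝ (Fin n → ℝ)) :
    Measure (Fin n → ℝ) :=
  (MeasureTheory.Measure.addHaar : Measure W).map Subtype.val

lemma measure_compl_msupp {X : Type*} [TopologicalSpace X] [MeasurableSpace X]
    [SecondCountableTopology X] (μ : Measure X) : μ (msupp μ)ᶜ = 0 := by
  set S : Set (Set X) := {U | IsOpen U ∧ μ U = 0} with hS
  obtain ⟨T, hTc, hTS, hTU⟩ :=
    TopologicalSpace.isOpen_sUnion_countable S (fun s hs => hs.1)
  have h1 : μ (⋃₀ T) = 0 :=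
    (measure_sUnion_null_iff hTc).2 fun s hs => (hTS hs).2
  refine measure_mono_null ?_ (hTU ▸ h1)
  intro x hx
  simp only [msupp, Set.mem_compl_iff, Set.mem_setOf_eq, not_forall] at hx
  obtain ⟨U, hU, hxU, hpos⟩ := hx
  exact ⟨U, ⟨hU, by simpa using hpos⟩, hxU⟩

lemma addConvPow_finite {V : Type*} [AddMonoid V] [MeasurableSpace V] [MeasurableAdd₂ V]
    (μ : Measure V) [IsFiniteMeasure μ] : ∀ d, IsFiniteMeasure (addConvPow μ d)
  | 0 => by unfold addConvPow; infer_instance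
  | d + 1 => by
      have := addConvPow_finite μ d
      unfold addConvPow
      exact Measure.isFiniteMeasure_map _ _

lemma conv_bound {n : ℕ} (μ : Measure (Fin n → ℝ)) [IsFiniteMeasure μ] (a : Fin n → ℝ)
    (U : Submodule ℝ (Fin n → ℝ)) :
    ∀ d : ℕ, (μ {x | x - a ∈ U}) ^ d ≤ addConvPow μ d {x | x - d • a ∈ U}
  | 0 => by
      have h0 : (0 : Fin n → ℝ) ∈ {x | x - (0 : ℕ) • a ∈ U} := by
        simp [Submodule.zero_mem]
      rw [pow_zero]
      exact le_of_eq (Measure.dirac_apply_of_mem h0).symm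
  | d + 1 => by
      haveI := addConvPow_finite μ d
      have hmeas : ∀ c : Fin n → ℝ, MeasurableSet {x | x - c ∈ U} := fun c =>
        ((Submodule.closed_of_finiteDimensional U).measurableSet).preimage
          (measurable_id.sub_const c)
      have hsub : {x | x - a ∈ U} ×ˢ {x | x - d • a ∈ U} ⊆
          (fun p : (Fin n → ℝ) × (Fin n → ℝ) => p.1 + p.2) ⁻¹' {x | x - (d + 1) • a ∈ U} := by
        rintro ⟨x, y⟩ ⟨hx, hy⟩
        have : x + y - (d + 1) • a = (x - a) + (y - d • a) := by
          rw [succ_nsmul' a d]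
          abel
        have hx' : x - a ∈ U := hx
        have hy' : y - d • a ∈ U := hy
        show x + y - (d + 1) • a ∈ U
        rw [this]
        exact U.add_mem hx' hy'
      calc (μ {x | x - a ∈ U}) ^ (d + 1)
          = μ {x | x - a ∈ U} * (μ {x | x - a ∈ U}) ^ d := by ring
        _ ≤ μ {x | x - a ∈ U} * addConvPow μ d {x | x - d • a ∈ U} :=
            mul_le_mul_right (conv_bound μ a U d) _
        _ = (μ.prod (addConvPow μ d)) ({x | x - a ∈ U} ×ˢ {x | x - d • a ∈ U}) :=
            (Measure.prod_prod _ _).symm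
        _ ≤ (μ.prod (addConvPow μ d))
              ((fun p : (Fin n → ℝ) × (Fin n → ℝ) => p.1 + p.2) ⁻¹' {x | x - (d + 1) • a ∈ U}) :=
            measure_mono hsub
        _ = addConvPow μ (d + 1) {x | x - (d + 1) • a ∈ U} := by
            rw [show addConvPow μ (d+1) =
              ((μ.prod (addConvPow μ d)).map fun p : _ × _ => p.1 + p.2) from rfl,
              Measure.map_apply measurable_add (hmeas _)]

lemma haar_coset {n : ℕ} (W U : Submodule ℝ (Fin n → ℝ)) (b : Fin n → ℝ) (hb : b ∈ W)
    (hWU : ¬ W ≤ U) : subspaceHaar W {x | x - b ∈ U} = 0 := by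
  have hmeas : MeasurableSet {x : Fin n → ℝ | x - b ∈ U} :=
    ((Submodule.closed_of_finiteDimensional U).measurableSet).preimage
      (measurable_id.sub_const b)
  rw [subspaceHaar, Measure.map_apply measurable_subtype_coe hmeas]
  have hset : (Subtype.val ⁻¹' {x | x - b ∈ U} : Set W)
      = ↑(AffineSubspace.mk' (⟨b, hb⟩ : W) (U.comap W.subtype)) := by
    ext x
    rw [SetLike.mem_coe, AffineSubspace.mem_mk']
    simp only [Set.mem_preimage, Set.mem_setOf_eq, vsub_eq_sub, Submodule.mem_comap]
    rfl
  rw [hset]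
  apply Measure.addHaar_affineSubspace
  intro htop
  apply hWU
  intro x hx
  have : (⟨x, hx⟩ : W) ∈ AffineSubspace.mk' (⟨b, hb⟩ : W) (U.comap W.subtype) := by
    rw [htop]; trivial
  rw [AffineSubspace.mem_mk', Submodule.mem_comap] at this
  have h2 : x - b ∈ U := this
  have hbU : b ∈ U := by
    have h0 : ((0 : W) : Fin n → ℝ) - b ∈ U := by
      have : (0 : W) ∈ AffineSubspace.mk' (⟨b, hb⟩ : W) (U.comap W.subtype) := by
        rw [htop]; trivial
      rw [AffineSubspace.mem_mk', Submodule.mem_comap] at this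
      exact this
    simpa using U.neg_mem h0
  simpa using U.add_mem h2 hbU

/-- Let `lam` be a Borel probability measure on `ℝ^n` (`n ≥ 2`) with a
pure decomposition `(f i)`, each component of which has some convolution power
absolutely continuous with respect to the Lebesgue measure on the span of its support.
Then every affine subspace of positive `lam`-measure is a vector subspace. -/
theorem stmt5 (n : ℕ) (hn : 2 ≤ n)
    (lam : Measure (Fin n → ℝ)) [IsProbabilityMeasure lam]
    (ι : Type) (f : ι → Measure (Fin n → ℝ)) (hdec : IsPureDecomp lam f)
    (hac : ∀ i : ι, ∃ d : ℕ,
      addConvPow (f i) d ≪ subspaceHaar (Submodule.span ℝ (msupp (f i))))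
    (A : AffineSubspace ℝ (Fin n → ℝ)) (hA : 0 < lam (A : Set (Fin n → ℝ))) :
    (0 : Fin n → ℝ) ∈ A ∧ ∃ W : Submodule ℝ (Fin n → ℝ), (A : Set (Fin n → ℝ)) = W := by
  obtain ⟨hcount, hpure, hdist, hsum⟩ := hdec
  have hAmeas : MeasurableSet (A : Set (Fin n → ℝ)) :=
    (AffineSubspace.closed_of_finiteDimensional A).measurableSet
  rw [hsum, Measure.sum_apply _ hAmeas] at hA
  have hex : ∃ i, f i (A : Set (Fin n → ℝ)) ≠ 0 := by
    by_contra h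
    push_neg at h
    simp only [h, tsum_zero, lt_self_iff_false] at hA
  obtain ⟨i, hi⟩ := hex
  set μ := f i with hμ
  haveI : IsFiniteMeasure μ := (hpure i).2.1
  set W := Submodule.span ℝ (msupp μ) with hW
  have hWnull : μ ((W : Set (Fin n → ℝ)))ᶜ = 0 :=
    measure_mono_null (Set.compl_subset_compl.2 Submodule.subset_span)
      (measure_compl_msupp μ)
  have hAW : μ ((A : Set (Fin n → ℝ)) ∩ W) ≠ 0 := by
    intro h
    apply hi
    have hsub : (A : Set (Fin n → ℝ)) ⊆ ((A : Set (Fin n → ℝ)) ∩ W) ∪ ((W : Set (Fin n → ℝ)))ᶜ := by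
      intro x hx
      by_cases hxW : x ∈ (W : Set (Fin n → ℝ))
      · exact Or.inl ⟨hx, hxW⟩
      · exact Or.inr hxW
    have := (measure_mono (μ := μ) hsub).trans (measure_union_le _ _)
    rw [h, hWnull] at this
    simpa using this
  obtain ⟨a, haA, haW⟩ : ((A : Set (Fin n → ℝ)) ∩ W).Nonempty := by
    by_contra h
    rw [Set.not_nonempty_iff_eq_empty] at h
    exact hAW (by simp [h])
  set U : Submodule ℝ (Fin n → ℝ) := A.direction ⊓ W with hU
  have hsubset : (A : Set (Fin n → ℝ)) ∩ W ⊆ {x | x - a ∈ U} := by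
    rintro x ⟨hxA, hxW⟩
    have h1 : x - a ∈ A.direction := by
      have := AffineSubspace.vsub_mem_direction hxA haA
      simpa [vsub_eq_sub] using this
    exact ⟨h1, W.sub_mem hxW haW⟩
  have hpos : μ {x | x - a ∈ U} ≠ 0 := fun h => hAW (measure_mono_null hsubset h)
  obtain ⟨d, hd⟩ := hac i
  have hW_le : W ≤ U := by
    by_contra hWU
    have hdaW : d • a ∈ W := by
      rw [← Nat.cast_smul_eq_nsmul ℝ]
      exact W.smul_mem _ haW
    have hzero : subspaceHaar W {x | x - d • a ∈ U} = 0 := haar_coset W U (d • a) hdaW hWU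
    have hconv : addConvPow μ d {x | x - d • a ∈ U} = 0 := hd hzero
    rcases Nat.eq_zero_or_pos d with rfl | hd0
    · have h1 := conv_bound μ a U 0
      rw [hconv, pow_zero, le_zero_iff] at h1
      exact one_ne_zero h1
    · have h1 := conv_bound μ a U d
      rw [hconv, le_zero_iff] at h1
      exact hpos ((pow_eq_zero_iff (by omega : d ≠ 0)).mp h1)
  have haV : a ∈ A.direction := le_trans hW_le inf_le_left haW
  have h0A : (0 : Fin n → ℝ) ∈ A := by
    have := AffineSubspace.vadd_mem_of_mem_direction (A.direction.neg_mem haV) haA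
    simpa [vadd_eq_add] using this
  refine ⟨h0A, A.direction, ?_⟩
  ext x
  constructor
  · intro hx
    have := AffineSubspace.vsub_mem_direction hx h0A
    simpa [vsub_eq_sub] using this
  · intro hx
    have := AffineSubspace.vadd_mem_of_mem_direction hx h0A
    simpa [vadd_eq_add] using this
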